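/- For any connected graph G with maximum degree Δ ≤ 3 and no isolated vertex, the total strong Roman domination number equals the total Roman domination number: γ^t_StR(G) = γ_tR(G). -/

import Mathlib

open Finset

variable {V : Type*} [Fintype V]

/-- The degree of a vertex. -/
noncomputable def degN (G : SimpleGraph V) (v : V) : ℕ := {u | G.Adj v u}.ncard

/-- Maximum degree. -/
noncomputable def maxDeg (G : SimpleGraph V) : ℕ := Finset.univ.sup (degN G)

/-- Minimum degree. -/
noncomputable def minDeg (G : SimpleGraph V) : ℕ := sInf {d | ∃ v, degN G v = d}

/-- No isolated vertex. -/
def NoIsolated (G : SimpleGraph V) : Prop := ∀ v, ∃ u, G.Adj v u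

/-- Total strong Roman dominating function. `(Δ+1)/2 = ⌈Δ/2⌉` and
`(m+1)/2 = ⌈m/2⌉` in natural-number arithmetic. -/
def IsTSRDF (G : SimpleGraph V) (f : V → ℕ) : Prop :=
  (∀ v, f v ≤ (maxDeg G + 1) / 2 + 1) ∧
  (∀ v, f v = 0 → ∃ u, G.Adj v u ∧
      1 + ({w | G.Adj u w ∧ f w = 0}.ncard + 1) / 2 ≤ f u) ∧
  (∀ v, 0 < f v → ∃ u, G.Adj v u ∧ 0 < f u)

/-- The total strong Roman domination number. -/
noncomputable def tsrd (G : SimpleGraph V) : ℕ :=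
  sInf {k | ∃ f : V → ℕ, IsTSRDF G f ∧ ∑ v, f v = k}

/-- Total Roman dominating function. -/
def IsTRDF (G : SimpleGraph V) (f : V → ℕ) : Prop :=
  (∀ v, f v ≤ 2) ∧
  (∀ v, f v = 0 → ∃ u, G.Adj v u ∧ f u = 2) ∧
  (∀ v, 0 < f v → ∃ u, G.Adj v u ∧ 0 < f u)

/-- Total Roman domination number. -/
noncomputable def trd (G : SimpleGraph V) : ℕ :=
  sInf {k | ∃ f : V → ℕ, IsTRDF G f ∧ ∑ v, f v = k}

theorem stmt3 (G : SimpleGraph V) (hc : G.Connected) (hni : NoIsolated G)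
    (hΔ : maxDeg G ≤ 3) : tsrd G = trd G := by
  classical
  -- every vertex witnesses maxDeg ≥ 1
  have hdegmax : ∀ v : V, degN G v ≤ maxDeg G := fun v =>
    Finset.le_sup (Finset.mem_univ v)
  have hmax : ∀ _ : V, 1 ≤ maxDeg G := by
    intro v
    obtain ⟨u, hu⟩ := hni v
    have h1 : 1 ≤ degN G v := by
      have hpos : 0 < ({u | G.Adj v u} : Set V).ncard :=
        (Set.ncard_pos (Set.toFinite _)).mpr ⟨u, hu⟩
      exact hpos
    exact le_trans h1 (hdegmax v)
  -- the constant-2 function is a TRDF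
  have htrdf2 : IsTRDF G (fun _ => 2) :=
    ⟨fun _ => le_refl 2, fun v h => absurd h (by norm_num),
     fun v _ => (hni v).imp fun u hu => ⟨hu, by norm_num⟩⟩
  -- every TRDF is a TSRDF (uses Δ ≤ 3)
  have key : ∀ f, IsTRDF G f → IsTSRDF G f := by
    rintro f ⟨h1, h2, h3⟩
    refine ⟨fun v => ?_, fun v hv => ?_, h3⟩
    · have := hmax v; have := h1 v; omega
    · obtain ⟨u, hadj, hu2⟩ := h2 v hv
      obtain ⟨w, hw, hwpos⟩ := h3 u (by omega)
      refine ⟨u, hadj, ?_⟩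
      have hsub : {x | G.Adj u x ∧ f x = 0} ⊆ {x | G.Adj u x} \ {w} := by
        rintro x ⟨hx1, hx2⟩
        exact ⟨hx1, by rintro rfl; omega⟩
      have hcard : ({x | G.Adj u x} \ {w} : Set V).ncard
          = ({x | G.Adj u x} : Set V).ncard - 1 :=
        Set.ncard_diff_singleton_of_mem hw
      have hm : {x | G.Adj u x ∧ f x = 0}.ncard ≤ degN G u - 1 := by
        have := Set.ncard_le_ncard hsub (Set.toFinite _)
        have hd : degN G u = ({x | G.Adj u x} : Set V).ncard := rfl
        omega
      have hdu : degN G u ≤ 3 := le_trans (hdegmax u) hΔ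
      omega
  have hTne : {k | ∃ f : V → ℕ, IsTRDF G f ∧ ∑ v, f v = k}.Nonempty :=
    ⟨_, _, htrdf2, rfl⟩
  have hSne : {k | ∃ f : V → ℕ, IsTSRDF G f ∧ ∑ v, f v = k}.Nonempty :=
    ⟨_, _, key _ htrdf2, rfl⟩
  apply le_antisymm
  · obtain ⟨f, hf, hsum⟩ := Nat.sInf_mem hTne
    exact Nat.sInf_le ⟨f, key f hf, hsum⟩
  · obtain ⟨g, ⟨hg1, hg2, hg3⟩, hsum⟩ := Nat.sInf_mem hSne
    have hTR : IsTRDF G (fun v => min (g v) 2) := by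
      clear hsum
      refine ⟨fun v => min_le_right _ _, ?_, ?_⟩
      · intro v hv
        have hv0 : g v = 0 := by dsimp only at hv; omega
        obtain ⟨u, hadj, hu⟩ := hg2 v hv0
        have hpos : 1 ≤ {w | G.Adj u w ∧ g w = 0}.ncard :=
          (Set.ncard_pos (Set.toFinite _)).mpr ⟨v, hadj.symm, hv0⟩
        exact ⟨u, hadj, by dsimp only; omega⟩
      · intro v hv
        have hv0 : 0 < g v := by dsimp only at hv; omega
        obtain ⟨u, hadj, hu⟩ := hg3 v hv0
        exact ⟨u, hadj, by dsimp only; omega⟩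
    have hle : ∑ v, min (g v) 2 ≤ ∑ v, g v :=
      Finset.sum_le_sum fun v _ => min_le_left _ _
    calc trd G ≤ ∑ v, min (g v) 2 := Nat.sInf_le ⟨_, hTR, rfl⟩
      _ ≤ ∑ v, g v := hle
      _ = tsrd G := hsum
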